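/- Let p_0, p_1 ≥ 0 with p_0 + p_1 = 1 and p_0 > 1/2, let λ_0 < λ_1, and let G_α(x) = α/(π(α² + x²)) for α > 0. Then the function H(θ) = p_0 G_α(θ − λ_0) + p_1 G_α(θ − λ_1) satisfies H'(λ_0) = p_1 G_α'(λ_0 − λ_1) > 0 whenever p_1 > 0, so λ_0 is not a local maximum of H; in particular argmax H ≠ λ_0. -/

import Mathlib

lemma lorentz_hasDerivAt (α : ℝ) (hα : 0 < α) (x : ℝ) :
    HasDerivAt (fun x : ℝ => α / (Real.pi * (α ^ 2 + x ^ 2)))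
      (-(2 * α * x) / (Real.pi * (α ^ 2 + x ^ 2) ^ 2)) x := by
  have hd : HasDerivAt (fun x : ℝ => Real.pi * (α ^ 2 + x ^ 2)) (Real.pi * (2 * x)) x := by
    have h1 : HasDerivAt (fun x : ℝ => α ^ 2 + x ^ 2) (2 * x) x := by
      simpa using ((hasDerivAt_pow 2 x).const_add (α ^ 2))
    exact h1.const_mul Real.pi
  have hne : Real.pi * (α ^ 2 + x ^ 2) ≠ 0 := by positivity
  have h := (hasDerivAt_const x α).div hd hne
  convert h using 1
  rfl
  rfl
  rfl
  have hpi : Real.pi ≠ 0 := Real.pi_ne_zero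
  field_simp
  ring

/-- The Lorentzian mixture `H(θ) = p₀ G_α(θ - λ₀) + p₁ G_α(θ - λ₁)` with
`G_α(x) = α/(π(α² + x²))`, `p₀ + p₁ = 1`, `p₀ > 1/2 > p₁ > 0`, `λ₀ < λ₁`, satisfies
`H'(λ₀) = p₁ G_α'(λ₀ - λ₁) > 0`; in particular `λ₀` is not a local maximum of `H`. -/
theorem stmt_17 (α p₀ p₁ lam0 lam1 : ℝ) (hα : 0 < α)
    (hp₀ : 0 ≤ p₀) (hp₁ : 0 < p₁) (hsum : p₀ + p₁ = 1) (hp : 1 / 2 < p₀)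
    (hlam : lam0 < lam1)
    (G : ℝ → ℝ) (hG : ∀ x, G x = α / (Real.pi * (α ^ 2 + x ^ 2)))
    (H : ℝ → ℝ) (hH : ∀ θ, H θ = p₀ * G (θ - lam0) + p₁ * G (θ - lam1)) :
    deriv H lam0 = p₁ * deriv G (lam0 - lam1)
    ∧ 0 < deriv H lam0
    ∧ ¬ IsLocalMax H lam0 := by
  have hGfun : G = fun x : ℝ => α / (Real.pi * (α ^ 2 + x ^ 2)) := funext hG
  have hGd : ∀ x : ℝ, HasDerivAt G (-(2 * α * x) / (Real.pi * (α ^ 2 + x ^ 2) ^ 2)) x := by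
    rw [hGfun]; exact lorentz_hasDerivAt α hα
  -- derivative of H at lam0
  have hinner0 : HasDerivAt (fun θ : ℝ => θ - lam0) 1 lam0 := by
    simpa using (hasDerivAt_id lam0).sub_const lam0
  have hinner1 : HasDerivAt (fun θ : ℝ => θ - lam1) 1 lam0 := by
    simpa using (hasDerivAt_id lam0).sub_const lam1
  have h0 : HasDerivAt (fun θ : ℝ => G (θ - lam0))
      (-(2 * α * (lam0 - lam0)) / (Real.pi * (α ^ 2 + (lam0 - lam0) ^ 2) ^ 2)) lam0 := by
    simpa [Function.comp_def] using HasDerivAt.comp (h₂ := G) (h := fun θ : ℝ => θ - lam0) (x := lam0) (hGd (lam0 - lam0)) hinner0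
  have h1 : HasDerivAt (fun θ : ℝ => G (θ - lam1))
      (-(2 * α * (lam0 - lam1)) / (Real.pi * (α ^ 2 + (lam0 - lam1) ^ 2) ^ 2)) lam0 := by
    simpa [Function.comp_def] using HasDerivAt.comp (h₂ := G) (h := fun θ : ℝ => θ - lam1) (x := lam0) (hGd (lam0 - lam1)) hinner1
  have hHd : HasDerivAt H
      (p₁ * (-(2 * α * (lam0 - lam1)) / (Real.pi * (α ^ 2 + (lam0 - lam1) ^ 2) ^ 2))) lam0 := by
    have h := (h0.const_mul p₀).add (h1.const_mul p₁)
    have hHfun : H = fun θ => p₀ * G (θ - lam0) + p₁ * G (θ - lam1) := funext hH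
    rw [hHfun]
    convert h using 1
    rfl
    rfl
    rfl
    simp
  have hGderiv : deriv G (lam0 - lam1)
      = -(2 * α * (lam0 - lam1)) / (Real.pi * (α ^ 2 + (lam0 - lam1) ^ 2) ^ 2) :=
    (hGd (lam0 - lam1)).deriv
  have heq : deriv H lam0 = p₁ * deriv G (lam0 - lam1) := by
    rw [hHd.deriv, hGderiv]
  have hpos : 0 < deriv H lam0 := by
    rw [heq, hGderiv]
    have hnum : 0 < -(2 * α * (lam0 - lam1)) := by nlinarith
    have hden : 0 < Real.pi * (α ^ 2 + (lam0 - lam1) ^ 2) ^ 2 := by positivity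
    exact mul_pos hp₁ (div_pos hnum hden)
  refine ⟨heq, hpos, fun hmax => ?_⟩
  have := hmax.deriv_eq_zero
  rw [this] at hpos
  exact lt_irrefl 0 hpos
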